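/- arXiv:math/0302035 — 5 statements merged into one kernel-verified Lean document; each statement's English description precedes it below -/
import Mathlib

section
/- Let S be the localization of R = k°[q,q⁻¹] at the maximal ideal (q-1)R, and let Ã →φ̃ B̃ →ψ̃ C̃ be a complex of S-modules with C̃ torsionfree over S and ker ψ̃ finitely generated over S. If the reduced complex Ã/(q-1)Ã → B̃/(q-1)B̃ → C̃/(q-1)C̃ is exact, then the original complex Ã → B̃ → C̃ is exact. -/
/-- Let `S` be the localization of `R = k°[q,q⁻¹]` at the maximal
ideal `(q-1)R`, and let `Ã →φ B̃ →ψ C̃` be a complex of `S`-modules with `C̃`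
torsionfree over `S` and `ker ψ` finitely generated over `S`. If the complex
reduced mod `(q-1)` is exact, then the original complex is exact. -/
theorem stmt_1 (k₀ : Type*) [Field k₀]
    (S : Type*) [CommRing S] [Algebra (LaurentPolynomial k₀) S]
    (hP : (Ideal.span {(LaurentPolynomial.T 1 - 1 : LaurentPolynomial k₀)}).IsPrime)
    (hloc : IsLocalization
      (@Ideal.primeCompl _ _
        (Ideal.span {(LaurentPolynomial.T 1 - 1 : LaurentPolynomial k₀)}) hP) S)
    (A B C : Type*) [AddCommGroup A] [AddCommGroup B] [AddCommGroup C]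
    [Module S A] [Module S B] [Module S C]
    (φ : A →ₗ[S] B) (ψ : B →ₗ[S] C)
    (hcomplex : ∀ a, ψ (φ a) = 0)
    (htfC : NoZeroSMulDivisors S C)
    (hfgker : (LinearMap.ker ψ).FG)
    -- exactness of the complex reduced modulo `q - 1`
    (hred : ∀ b : B,
      (∃ c : C, ψ b =
        (algebraMap (LaurentPolynomial k₀) S (LaurentPolynomial.T 1 - 1)) • c) ↔
      (∃ (a : A) (b' : B), b = φ a +
        (algebraMap (LaurentPolynomial k₀) S (LaurentPolynomial.T 1 - 1)) • b')) :
    Function.Exact φ ψ := by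
  haveI := hP
  set P : Ideal (LaurentPolynomial k₀) :=
    Ideal.span {(LaurentPolynomial.T 1 - 1 : LaurentPolynomial k₀)} with hPdef
  haveI : IsLocalization.AtPrime S P := hloc
  haveI hSL : IsLocalRing S := IsLocalization.AtPrime.isLocalRing S P
  set π : S := algebraMap (LaurentPolynomial k₀) S (LaurentPolynomial.T 1 - 1) with hπ
  -- T 1 - 1 ≠ 0
  have hT : (LaurentPolynomial.T 1 - 1 : LaurentPolynomial k₀) ≠ 0 := by
    intro h
    rw [sub_eq_zero] at h
    rw [LaurentPolynomial.T, AddMonoidAlgebra.one_def] at h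
    have := AddMonoidAlgebra.single_left_injective (M := ℤ) (one_ne_zero (α := k₀)) h
    exact one_ne_zero this
  -- algebraMap is injective
  have hinj : Function.Injective (algebraMap (LaurentPolynomial k₀) S) := by
    apply IsLocalization.injective S (M := P.primeCompl)
    intro x hx
    exact mem_nonZeroDivisors_of_ne_zero (fun h0 => hx (h0 ▸ P.zero_mem))
  have hπ0 : π ≠ 0 := fun h => hT (hinj (h.trans (map_zero _).symm))
  -- π is not a unit
  have hπu : ¬ IsUnit π := by
    intro h
    rw [IsLocalization.AtPrime.isUnit_to_map_iff S P] at h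
    exact h (Ideal.mem_span_singleton_self _)
  -- key step: every element of ker ψ is φ a + π • b' with b' ∈ ker ψ
  have key : ∀ b ∈ LinearMap.ker ψ, ∃ a : A, ∃ b' : B,
      b = φ a + π • b' ∧ b' ∈ LinearMap.ker ψ := by
    intro b hb
    rw [LinearMap.mem_ker] at hb
    obtain ⟨a, b', hab⟩ := (hred b).mp ⟨0, by rw [hb, smul_zero]⟩
    refine ⟨a, b', hab, ?_⟩
    have : ψ b = ψ (φ a) + π • ψ b' := by rw [hab, map_add, map_smul]
    rw [hb, hcomplex] at this
    rw [zero_add] at this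
    have h0 : π • ψ b' = 0 := this.symm
    rcases htfC.eq_zero_or_eq_zero_of_smul_eq_zero h0 with h | h
    · exact absurd h hπ0
    · exact LinearMap.mem_ker.mpr h
  rw [LinearMap.exact_iff]
  apply le_antisymm
  · -- ker ψ ≤ range φ by Nakayama
    apply Submodule.le_of_le_smul_of_le_jacobson_bot hfgker
      (I := Ideal.span {π})
    · rw [IsLocalRing.jacobson_eq_maximalIdeal ⊥ bot_ne_top, Ideal.span_le,
        Set.singleton_subset_iff]
      exact hπu
    · intro b hb
      obtain ⟨a, b', hab, hb'⟩ := key b hb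
      rw [hab]
      exact Submodule.add_mem_sup (LinearMap.mem_range_self φ a)
        (Submodule.smul_mem_smul (Ideal.mem_span_singleton_self π) hb')
  · rintro _ ⟨a, rfl⟩
    exact LinearMap.mem_ker.mpr (hcomplex a)
end

section
/- Let R = k°[q,q⁻¹] with q transcendental over k° in a field k. Let H be an R-bialgebra and B a left H-comodule with structure map λ: B → H⊗_R B, both torsionfree as R-modules, and φ: A → B an R-module map with image contained in the coinvariants B^{co H} = {b : λ(b) = 1⊗b}. Suppose A = ⊕_j A_j and B = ⊕_j B_j with each B_j finitely generated over R, φ(A_j) ⊆ B_j, and λ(B_j) ⊆ H⊗_R B_j. If the coinvariants of B̄ = B/(q-1)B over the k°-bialgebra H̄ = H/(q-1)H equal the image of the induced map φ̄: Ā → B̄, then the coinvariants of k⊗_R B over the k-bialgebra k⊗_R H equal the image of id⊗φ: k⊗_R A → k⊗_R B. -/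
open TensorProduct LaurentPolynomial

lemma laurent_isDomain (k₀ : Type*) [Field k₀] : IsDomain (LaurentPolynomial k₀) :=
  NoZeroDivisors.to_isDomain _

lemma laurent_pid (k₀ : Type*) [Field k₀] : IsPrincipalIdealRing (LaurentPolynomial k₀) := by
  haveI := LaurentPolynomial.isLocalization (R := k₀)
  constructor
  intro I
  obtain ⟨g, hg⟩ := (IsPrincipalIdealRing.principal
    (I.comap (algebraMap (Polynomial k₀) (LaurentPolynomial k₀)))).principal
  refine ⟨algebraMap _ _ g, ?_⟩
  have := IsLocalization.map_comap (Submonoid.powers (Polynomial.X : Polynomial k₀))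
    (LaurentPolynomial k₀) I
  rw [← this, show Ideal.under (Polynomial k₀) I = I.comap (algebraMap (Polynomial k₀) (LaurentPolynomial k₀)) from rfl, hg]
  simp [Ideal.map_span, Ideal.submodule_span_eq]
lemma flat_of_tf (R M : Type*) [CommRing R] [IsDomain R] [IsPrincipalIdealRing R]
    [AddCommGroup M] [Module R M] [NoZeroSMulDivisors R M] : Module.Flat R M := by
  rw [Module.Flat.iff_rTensor_injective']
  intro I
  obtain ⟨a, ha⟩ := (IsPrincipalIdealRing.principal I).principal
  subst ha
  rcases eq_or_ne a 0 with rfl | ha0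
  · intro x y _
    have hz : ∀ z : (Ideal.span {(0:R)} : Ideal R) ⊗[R] M, z = 0 := by
      intro z
      induction z using TensorProduct.induction_on with
      | zero => rfl
      | tmul r m =>
        obtain ⟨c, hc⟩ := Ideal.mem_span_singleton'.mp r.2
        have h0 : r = 0 := Subtype.ext (by rw [← hc, mul_zero]; rfl)
        rw [h0, zero_tmul]
      | add x y hx hy => rw [hx, hy, add_zero]
    rw [hz x, hz y]
  · have htf : ∀ x : R ⊗[R] M, a • x = 0 → x = 0 := by
      intro x hx
      have h2 : a • (TensorProduct.lid R M x) = 0 := by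
        rw [← map_smul, hx, map_zero]
      rcases smul_eq_zero.mp h2 with h | h
      · exact absurd h ha0
      · exact (map_eq_zero_iff _ (TensorProduct.lid R M).injective).mp h
    have hmem : ∀ r : R, r * a ∈ (Ideal.span {a} : Ideal R) :=
      fun r => Ideal.mem_span_singleton'.mpr ⟨r, rfl⟩
    let f : R →ₗ[R] (Ideal.span {a} : Ideal R) :=
      (LinearMap.toSpanSingleton R R a).codRestrict _ (fun r => by
        simpa [LinearMap.toSpanSingleton_apply, smul_eq_mul] using hmem r)
    have hf : Function.Bijective f := by
      constructor
      · intro x y hxy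
        have h1 : x • a = y • a := congrArg Subtype.val hxy
        have : (x - y) * a = 0 := by
          rw [sub_mul, sub_eq_zero]
          simpa [smul_eq_mul] using h1
        rcases mul_eq_zero.mp this with h | h
        · exact sub_eq_zero.mp h
        · exact absurd h ha0
      · rintro ⟨y, hy⟩
        obtain ⟨c, hc⟩ := Ideal.mem_span_singleton'.mp hy
        exact ⟨c, Subtype.ext (by simpa [f, smul_eq_mul] using hc)⟩
    let e : R ≃ₗ[R] (Ideal.span {a} : Ideal R) := LinearEquiv.ofBijective f hf
    have hcomp : (Ideal.span {a} : Ideal R).subtype ∘ₗ f =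
        a • (LinearMap.id : R →ₗ[R] R) := by
      rw [LinearMap.subtype_comp_codRestrict]
      ext
      simp
    have hinj : Function.Injective
        (LinearMap.rTensor M ((Ideal.span {a} : Ideal R).subtype ∘ₗ f)) := by
      rw [hcomp, LinearMap.rTensor_smul, LinearMap.rTensor_id]
      intro x y hxy
      simp only [LinearMap.smul_apply, LinearMap.id_apply] at hxy
      exact sub_eq_zero.mp (htf (x - y) (by rw [smul_sub, hxy, sub_self]))
    rw [LinearMap.rTensor_comp, LinearMap.coe_comp] at hinj
    exact hinj.of_comp_right (LinearEquiv.rTensor M e).surjective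
-- injectivity of algebraMap (LaurentPolynomial k₀) k from transcendence of q
lemma algmap_inj (k₀ k : Type*) [Field k₀] [Field k] [Algebra k₀ k]
    [Algebra (LaurentPolynomial k₀) k] [IsScalarTower k₀ (LaurentPolynomial k₀) k]
    (htrans : Transcendental k₀ (algebraMap (LaurentPolynomial k₀) k (T 1))) :
    Function.Injective (algebraMap (LaurentPolynomial k₀) k) := by
  set q := algebraMap (LaurentPolynomial k₀) k (T 1) with hq
  have haev : ∀ p : Polynomial k₀,
      algebraMap (LaurentPolynomial k₀) k (p.toLaurent) = Polynomial.aeval q p := by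
    have : ((IsScalarTower.toAlgHom k₀ (LaurentPolynomial k₀) k).comp
        (Polynomial.toLaurentAlg (R := k₀))) = Polynomial.aeval q := by
      apply Polynomial.algHom_ext
      simp [Polynomial.toLaurentAlg, hq]
    intro p
    have := congrArg (fun f => f p) this
    simpa using this
  have hinjaev : Function.Injective (Polynomial.aeval q (R := k₀)) :=
    (transcendental_iff_injective).mp htrans
  intro f g hfg
  have hsub : algebraMap (LaurentPolynomial k₀) k (f - g) = 0 := by
    rw [map_sub, hfg, sub_self]
  obtain ⟨n, f', hf'⟩ := (f - g).exists_T_pow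
  have : Polynomial.aeval q f' = 0 := by
    rw [← haev, hf', map_mul, hsub, zero_mul]
  have hf0 : f' = 0 := hinjaev (by rw [this, map_zero])
  have hmul : (f - g) * T n = 0 := by rw [← hf', hf0, map_zero]
  have h2 : f - g = 0 := by
    haveI : IsDomain (LaurentPolynomial k₀) := NoZeroDivisors.to_isDomain _
    rcases mul_eq_zero.mp hmul with h | h
    · exact h
    · exact absurd h (isUnit_T n).ne_zero
  exact sub_eq_zero.mp h2

-- evaluation at T = 1
noncomputable def epsHom (k₀ : Type*) [Field k₀] : LaurentPolynomial k₀ →ₐ[k₀] k₀ :=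
  AddMonoidAlgebra.lift k₀ k₀ ℤ 1

lemma epsHom_T (k₀ : Type*) [Field k₀] (n : ℤ) : epsHom k₀ (T n) = 1 := by
  rw [epsHom, T, AddMonoidAlgebra.lift_single]
  simp

lemma nonzero_of_sub_one_mem (k₀ : Type*) [Field k₀] (r : LaurentPolynomial k₀)
    (hr : r - 1 ∈ Ideal.span {T (R := k₀) 1 - 1}) : r ≠ 0 := by
  obtain ⟨c, hc⟩ := Ideal.mem_span_singleton'.mp hr
  intro h0
  have := congrArg (epsHom k₀) hc
  rw [map_mul, map_sub, map_sub, epsHom_T, map_one, sub_self, mul_zero, h0] at this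
  simp at this
open DirectSum
section Proj
variable {R B J : Type*} [CommRing R] [AddCommGroup B] [Module R B] [DecidableEq J]
  {N : J → Submodule R B}

noncomputable def projOf (h : DirectSum.IsInternal N) (j : J) : B →ₗ[R] B :=
  (N j).subtype ∘ₗ (DirectSum.component R J (fun j => N j) j) ∘ₗ
    (LinearEquiv.ofBijective (DirectSum.coeLinearMap N) h).symm.toLinearMap

lemma projOf_mem (h : DirectSum.IsInternal N) (j : J) (b : B) : projOf h j b ∈ N j := by
  simp only [projOf, LinearMap.coe_comp, Function.comp_apply, Submodule.coe_subtype]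
  exact Subtype.coe_prop _

lemma projOf_of_mem (h : DirectSum.IsInternal N) {i j : J} {b : B} (hb : b ∈ N i) :
    projOf h j b = if i = j then b else 0 := by
  simp only [projOf, LinearMap.coe_comp, Function.comp_apply, Submodule.coe_subtype,
    LinearEquiv.coe_coe]
  by_cases hij : i = j
  · subst hij
    rw [if_pos rfl]
    exact congrArg Subtype.val (h.ofBijective_coeLinearMap_of_mem hb)
  · rw [if_neg hij]
    exact congrArg Subtype.val (h.ofBijective_coeLinearMap_of_mem_ne hij hb)

lemma sum_projOf (h : DirectSum.IsInternal N) (b : B) :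
    ∃ s : Finset J, (∀ j ∉ s, projOf h j b = 0) ∧ b = ∑ j ∈ s, projOf h j b := by
  classical
  set e := LinearEquiv.ofBijective (DirectSum.coeLinearMap N) h with he
  set x := e.symm b with hx
  refine ⟨DFinsupp.support x, ?_, ?_⟩
  · intro j hj
    have : x j = 0 := DFinsupp.notMem_support_iff.mp hj
    simp only [projOf, LinearMap.coe_comp, Function.comp_apply, Submodule.coe_subtype,
      LinearEquiv.coe_coe]
    rw [← hx]
    change ((x j : B)) = 0
    rw [this]; rfl
  · have hb : b = e x := by rw [hx, LinearEquiv.apply_symm_apply]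
    have hsum : (∑ j ∈ DFinsupp.support x, DirectSum.of (fun j => N j) j (x j)) = x :=
      DirectSum.sum_support_of x
    calc b = e x := hb
    _ = DirectSum.coeLinearMap N x := rfl
    _ = DirectSum.coeLinearMap N (∑ j ∈ DFinsupp.support x, DirectSum.of (fun j => N j) j (x j)) := by rw [hsum]
    _ = ∑ j ∈ DFinsupp.support x, DirectSum.coeLinearMap N (DirectSum.of (fun j => N j) j (x j)) := map_sum _ _ _
    _ = ∑ j ∈ DFinsupp.support x, projOf h j b := by
        refine Finset.sum_congr rfl fun j _ => ?_
        rw [DirectSum.coeLinearMap_of]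
        rfl
end Proj

set_option maxHeartbeats 2000000 in
set_option synthInstance.maxHeartbeats 400000 in
open TensorProduct in
/-- Quantum First Fundamental Theorem transfer: `R = k°[q,q⁻¹]`
with `q = T 1` transcendental over `k°` in a field `k`.  `H` is an
`R`-bialgebra and `B` a left `H`-comodule with structure map `lam`, both
torsionfree over `R`; `φ : A → B` has image in the coinvariants.  Given
compatible direct sum decompositions with the `B_j` finitely generated, if the
coinvariants of `B/(q-1)B` equal the image of the reduced map `φ̄`, then the
coinvariants of `k ⊗_R B` (over the `k`-bialgebra `k ⊗_R H`) equal the image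
of `id ⊗ φ`. -/
theorem stmt_7 (k₀ : Type*) [Field k₀]
    (k : Type*) [Field k] [Algebra k₀ k] [Algebra (LaurentPolynomial k₀) k]
    [IsScalarTower k₀ (LaurentPolynomial k₀) k]
    (htrans : Transcendental k₀
      (algebraMap (LaurentPolynomial k₀) k (LaurentPolynomial.T 1)))
    (H : Type*) [Ring H] [Bialgebra (LaurentPolynomial k₀) H]
    (A B : Type*) [AddCommGroup A] [AddCommGroup B]
    [Module (LaurentPolynomial k₀) A] [Module (LaurentPolynomial k₀) B]
    (lam : B →ₗ[LaurentPolynomial k₀] H ⊗[LaurentPolynomial k₀] B)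
    -- comodule axioms for `lam`
    (hcounit : ∀ b : B, (TensorProduct.lid (LaurentPolynomial k₀) B)
      ((LinearMap.rTensor B (Coalgebra.counit (R := LaurentPolynomial k₀) (A := H)))
        (lam b)) = b)
    (hcoassoc : ∀ b : B, (TensorProduct.assoc (LaurentPolynomial k₀) H H B)
      ((LinearMap.rTensor B (Coalgebra.comul (R := LaurentPolynomial k₀) (A := H)))
        (lam b)) = (LinearMap.lTensor H lam) (lam b))
    -- torsionfreeness of `B` and `H`
    (htfB : NoZeroSMulDivisors (LaurentPolynomial k₀) B)
    (htfH : NoZeroSMulDivisors (LaurentPolynomial k₀) H)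
    (φ : A →ₗ[LaurentPolynomial k₀] B)
    -- the image of `φ` consists of coinvariants
    (himg : ∀ a : A, lam (φ a) = (1 : H) ⊗ₜ[LaurentPolynomial k₀] (φ a))
    -- direct sum decompositions
    (J : Type*) [DecidableEq J] (Aj : J → Submodule (LaurentPolynomial k₀) A)
    (Bj : J → Submodule (LaurentPolynomial k₀) B)
    (hAdec : DirectSum.IsInternal Aj) (hBdec : DirectSum.IsInternal Bj)
    (hBfg : ∀ j, (Bj j).FG)
    (hφj : ∀ j, ∀ a ∈ Aj j, φ a ∈ Bj j)
    (hlamj : ∀ j, ∀ b ∈ Bj j,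
      lam b ∈ LinearMap.range (LinearMap.lTensor H (Bj j).subtype))
    -- the coinvariants of `B/(q-1)B` over `H/(q-1)H` equal the image of `φ̄`
    (hred : ∀ b : B,
      (∃ z : H ⊗[LaurentPolynomial k₀] B,
        lam b - (1 : H) ⊗ₜ[LaurentPolynomial k₀] b =
          ((LaurentPolynomial.T 1 - 1 : LaurentPolynomial k₀)) • z) ↔
      (∃ (a : A) (b' : B), b = φ a +
          ((LaurentPolynomial.T 1 - 1 : LaurentPolynomial k₀)) • b')) :
    -- conclusion: coinvariants of `k ⊗ B` equal the image of `id ⊗ φ`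
    ∀ x : k ⊗[LaurentPolynomial k₀] B,
      (LinearMap.baseChange k lam) x =
        (LinearMap.baseChange k ((TensorProduct.mk (LaurentPolynomial k₀) H B) 1)) x
      ↔ x ∈ LinearMap.range (LinearMap.baseChange k φ) := by
  classical
  set R := LaurentPolynomial k₀ with hR
  haveI : IsDomain R := laurent_isDomain k₀
  haveI : IsPrincipalIdealRing R := laurent_pid k₀
  haveI : IsNoetherianRing R := PrincipalIdealRing.isNoetherianRing
  haveI := htfB; haveI := htfH
  set ρ := algebraMap R k with hρ
  have hinj : Function.Injective ρ := algmap_inj k₀ k htrans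
  haveI htfk : NoZeroSMulDivisors R k := by
    refine ⟨fun {r c} h => ?_⟩
    rw [Algebra.smul_def] at h
    rcases mul_eq_zero.mp h with h | h
    · exact Or.inl (hinj (by rw [h, map_zero]))
    · exact Or.inr h
  haveI : Module.Flat R B := flat_of_tf R B
  haveI : Module.Flat R k := flat_of_tf R k
  -- the coinvariants operator
  set L : B →ₗ[R] H ⊗[R] B := lam - (TensorProduct.mk R H B) 1 with hLdef
  have hL : ∀ b : B, L b = lam b - (1 : H) ⊗ₜ[R] b := fun b => rfl
  have hLφ : ∀ a : A, L (φ a) = 0 := by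
    intro a
    rw [hL, himg a, sub_self]
  set q1 : R := LaurentPolynomial.T 1 - 1 with hq1
  have hq1ne : q1 ≠ 0 := by
    intro h
    have : ρ (LaurentPolynomial.T 1) = 1 := by
      have := congrArg ρ h
      rw [map_sub, map_one, map_zero, sub_eq_zero] at this
      exact this
    exact htrans (this ▸ ((map_one (algebraMap k₀ k)) ▸ isAlgebraic_algebraMap (1 : k₀)))
  -- torsionfreeness of H ⊗ B
  have htfHB : ∀ z : H ⊗[R] B, q1 • z = 0 → z = 0 := by
    intro z hz
    have hf : Function.Injective (q1 • (LinearMap.id : H →ₗ[R] H)) := by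
      intro h1 h2 hh
      simp only [LinearMap.smul_apply, LinearMap.id_apply] at hh
      have : q1 • (h1 - h2) = 0 := by rw [smul_sub, hh, sub_self]
      rcases smul_eq_zero.mp this with h | h
      · exact absurd h hq1ne
      · exact sub_eq_zero.mp h
    have hinj2 : Function.Injective
        (LinearMap.rTensor B (q1 • (LinearMap.id : H →ₗ[R] H))) :=
      Module.Flat.rTensor_preserves_injective_linearMap _ hf
    rw [LinearMap.rTensor_smul, LinearMap.rTensor_id] at hinj2
    have : (q1 • (LinearMap.id : H ⊗[R] B →ₗ[R] H ⊗[R] B)) z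
        = (q1 • (LinearMap.id : H ⊗[R] B →ₗ[R] H ⊗[R] B)) 0 := by
      simp only [LinearMap.smul_apply, LinearMap.id_apply, smul_zero]
      exact hz
    exact hinj2 this
  -- projections
  set pB := fun j => projOf hBdec j with hpB
  set pA := fun j => projOf hAdec j with hpA
  have hpBφ : ∀ (j : J) (a : A), pB j (φ a) = φ (pA j a) := by
    intro j a
    obtain ⟨s, hs0, hssum⟩ := sum_projOf hAdec a
    by_cases hjs : j ∈ s
    · conv_lhs => rw [hssum]
      rw [map_sum, map_sum]
      rw [Finset.sum_congr rfl (fun i _ => projOf_of_mem hBdec (hφj i _ (projOf_mem hAdec i a)))]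
      rw [Finset.sum_ite_eq' s j _]
      rw [if_pos hjs]
    · rw [hs0 j hjs, map_zero]
      conv_lhs => rw [hssum]
      rw [map_sum, map_sum]
      rw [Finset.sum_congr rfl (fun i _ => projOf_of_mem hBdec (hφj i _ (projOf_mem hAdec i a)))]
      rw [Finset.sum_ite_eq' s j _]
      rw [if_neg hjs]
  -- L maps each component into H ⊗ (component)
  have hLN : ∀ (j : J) (b : B), b ∈ Bj j →
      L b ∈ LinearMap.range (LinearMap.lTensor H (Bj j).subtype) := by
    intro j b hb
    rw [hL]
    obtain ⟨z, hz⟩ := hlamj j b hb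
    refine ⟨z - (1 : H) ⊗ₜ[R] (⟨b, hb⟩ : Bj j), ?_⟩
    rw [map_sub, hz]
    congr 1
  -- projecting in the second tensor factor
  have hprojT : ∀ (i j : J) (y : H ⊗[R] B),
      y ∈ LinearMap.range (LinearMap.lTensor H (Bj i).subtype) →
      LinearMap.lTensor H (pB j) y = if i = j then y else 0 := by
    intro i j y hy
    obtain ⟨z, rfl⟩ := hy
    rw [← LinearMap.comp_apply, ← LinearMap.lTensor_comp]
    have hcomp : pB j ∘ₗ (Bj i).subtype =
        if i = j then (Bj i).subtype else 0 := by
      apply LinearMap.ext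
      rintro ⟨b, hb⟩
      by_cases hij : i = j
      · simp only [if_pos hij, LinearMap.comp_apply, Submodule.coe_subtype]
        rw [hpB, projOf_of_mem hBdec hb, if_pos hij]
      · simp only [if_neg hij, LinearMap.comp_apply, Submodule.coe_subtype, LinearMap.zero_apply]
        rw [hpB, projOf_of_mem hBdec hb, if_neg hij]
    rw [hcomp]
    by_cases hij : i = j
    · rw [if_pos hij, if_pos hij]
    · rw [if_neg hij, if_neg hij, LinearMap.lTensor_zero, LinearMap.zero_apply]
  -- coinvariants are stable under projections
  have hkerp : ∀ (b : B), L b = 0 → ∀ j, L (pB j b) = 0 := by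
    intro b hb j
    obtain ⟨s, hs0, hssum⟩ := sum_projOf hBdec b
    by_cases hjs : j ∈ s
    · have h1 : (0 : H ⊗[R] B) = ∑ i ∈ s, L (pB i b) := by
        rw [← hb]
        conv_lhs => rw [hssum]
        rw [map_sum]
      have h2 := congrArg (LinearMap.lTensor H (pB j)) h1
      rw [map_zero, map_sum] at h2
      rw [Finset.sum_congr rfl
        (fun i _ => hprojT i j _ (hLN i _ (projOf_mem hBdec i b)))] at h2
      rw [Finset.sum_ite_eq' s j _, if_pos hjs] at h2
      exact h2.symm
    · rw [hpB, hs0 j hjs, map_zero]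
  -- key reduction step on each component
  have hkey : ∀ (j : J) (b : B), L b = 0 → b ∈ Bj j →
      ∃ (a : A) (b' : B), L b' = 0 ∧ b' ∈ Bj j ∧ b = φ a + q1 • b' := by
    intro j b hb hbj
    obtain ⟨a, b'', hab⟩ := (hred b).mp ⟨0, by rw [smul_zero, ← hL, hb]⟩
    have hb'' : L b'' = 0 := by
      apply htfHB
      have h1 := congrArg L hab
      rw [hb, map_add, hLφ, zero_add, map_smul] at h1
      exact h1.symm
    refine ⟨pA j a, pB j b'', hkerp b'' hb'' j, projOf_mem hBdec j b'', ?_⟩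
    have hbp : pB j b = b := by
      rw [hpB, projOf_of_mem hBdec hbj, if_pos rfl]
    calc b = pB j b := hbp.symm
    _ = pB j (φ a) + q1 • pB j b'' := by rw [hab, map_add, map_smul]
    _ = φ (pA j a) + q1 • pB j b'' := by rw [hpBφ]
  -- Nakayama on each component
  have hnak : ∀ j : J, ∃ r : R, r ≠ 0 ∧
      ∀ b : B, L b = 0 → b ∈ Bj j → r • b ∈ LinearMap.range φ := by
    intro j
    set D : Submodule R B := LinearMap.range φ with hD
    set Cj : Submodule R B := LinearMap.ker L ⊓ Bj j with hCj
    set I : Ideal R := Ideal.span {q1} with hI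
    set N : Submodule R (B ⧸ D) := Cj.map D.mkQ with hN
    set P : Submodule R (B ⧸ D) := (Bj j).map D.mkQ with hP
    have hPfg : P.FG := Submodule.FG.map _ (hBfg j)
    haveI : IsNoetherian R P := isNoetherian_of_fg_of_noetherian P hPfg
    have hNle : N ≤ P := Submodule.map_mono inf_le_right
    have hNfg : N.FG := by
      have h1 : Submodule.map P.subtype (Submodule.comap P.subtype N) = N := by
        rw [Submodule.map_comap_subtype, inf_eq_right.mpr hNle]
      rw [← h1]
      exact Submodule.FG.map _ (IsNoetherian.noetherian _)
    have hle : N ≤ I • N := by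
      rintro x hx
      obtain ⟨b, hb, rfl⟩ := hx
      obtain ⟨hbL, hbj⟩ := hb
      obtain ⟨a, b', hb'L, hb'j, hab⟩ := hkey j b (LinearMap.mem_ker.mp hbL) hbj
      have h1 : D.mkQ b = q1 • D.mkQ b' := by
        rw [hab, map_add, map_smul]
        have : D.mkQ (φ a) = 0 := by
          rw [← LinearMap.mem_ker, Submodule.ker_mkQ]
          exact ⟨a, rfl⟩
        rw [this, zero_add]
      rw [h1]
      exact Submodule.smul_mem_smul (Ideal.subset_span rfl)
        (Submodule.mem_map_of_mem ⟨LinearMap.mem_ker.mpr hb'L, hb'j⟩)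
    obtain ⟨r, hr1, hr0⟩ :=
      Submodule.exists_sub_one_mem_and_smul_eq_zero_of_fg_of_le_smul I N hNfg hle
    refine ⟨r, nonzero_of_sub_one_mem k₀ r (hq1 ▸ hr1), ?_⟩
    intro b hbL hbj
    have h2 : D.mkQ (r • b) = 0 := by
      rw [map_smul]
      exact hr0 _ (Submodule.mem_map_of_mem ⟨LinearMap.mem_ker.mpr hbL, hbj⟩)
    rw [← LinearMap.mem_ker, Submodule.ker_mkQ] at h2
    exact h2
  -- final assembly
  intro x
  constructor
  · intro hx
    have hx0 : LinearMap.lTensor k L x = 0 := by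
      have h1 : (LinearMap.baseChange k L) x = 0 := by
        rw [hLdef, LinearMap.baseChange_sub, LinearMap.sub_apply, hx, sub_self]
      rw [← LinearMap.baseChange_eq_ltensor]
      exact h1
    have hex : Function.Exact ((LinearMap.ker L).subtype) L :=
      LinearMap.exact_subtype_ker_map L
    have hex2 := Module.Flat.lTensor_exact k hex
    obtain ⟨y, hy⟩ := (hex2 x).mp hx0
    rw [← hy]
    -- show the image of any element of k ⊗ ker L is in the range of baseChange φ
    clear hy hx hx0
    induction y using TensorProduct.induction_on with
    | zero => rw [map_zero]; exact Submodule.zero_mem _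
    | add y z hy hz =>
      rw [map_add]
      exact Submodule.add_mem _ hy hz
    | tmul c bb =>
      obtain ⟨b, hbmem⟩ := bb
      have hbb : L b = 0 := LinearMap.mem_ker.mp hbmem
      have htm : LinearMap.lTensor k (LinearMap.ker L).subtype
          (c ⊗ₜ[R] (⟨b, hbmem⟩ : LinearMap.ker L)) = c ⊗ₜ[R] b := rfl
      rw [htm]
      obtain ⟨s, hs0, hssum⟩ := sum_projOf hBdec b
      rw [hssum, TensorProduct.tmul_sum]
      refine Submodule.sum_mem _ (fun j _ => ?_)
      obtain ⟨r, hrne, hr⟩ := hnak j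
      obtain ⟨a, ha⟩ := hr (pB j b) (hkerp _ hbb j) (projOf_mem hBdec j _)
      have hrk : ρ r ≠ 0 := fun h => hrne (hinj (by rw [h, map_zero]))
      refine ⟨((ρ r)⁻¹ * c) ⊗ₜ[R] a, ?_⟩
      rw [LinearMap.baseChange_tmul, ha, TensorProduct.tmul_smul, TensorProduct.smul_tmul',
        Algebra.smul_def]
      congr 1
      field_simp
      rfl
  · rintro ⟨y, rfl⟩
    have hc : lam ∘ₗ φ = (TensorProduct.mk R H B) 1 ∘ₗ φ := by
      apply LinearMap.ext
      intro a
      rw [LinearMap.comp_apply, LinearMap.comp_apply, himg a]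
      rfl
    rw [← LinearMap.comp_apply (LinearMap.baseChange k lam),
      ← LinearMap.comp_apply (LinearMap.baseChange k ((TensorProduct.mk R H B) 1)),
      ← LinearMap.baseChange_comp, ← LinearMap.baseChange_comp, hc]
end

section
/- Let R = k°[q,q⁻¹] with q transcendental over k° in a field k. Let φ: A → B be an R-algebra homomorphism with B torsionfree over R, and I an ideal of A with I ⊆ ker φ. Suppose there are R-module decompositions I = ⊕_j I_j, A = ⊕_j A_j, B = ⊕_j B_j with each A_j finitely generated, I_j ⊆ A_j, and φ(A_j) ⊆ B_j. If the kernel of the induced map φ̄: A/(q-1)A → B/(q-1)B equals the image of I/(q-1)I, then the kernel of id⊗φ: k⊗_R A → k⊗_R B equals the image of k⊗_R I. -/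
set_option maxHeartbeats 1000000


open TensorProduct in
/-- Quantum Second Fundamental Theorem transfer: `R = k°[q,q⁻¹]`
with `q = T 1` transcendental over `k°` in a field `k`.  `φ : A → B` is an
`R`-algebra homomorphism with `B` torsionfree, `I ⊆ ker φ` an ideal of `A`,
with compatible direct sum decompositions (`A_j` finitely generated,
`I_j ⊆ A_j`).  If the kernel of `φ̄ : A/(q-1)A → B/(q-1)B` equals the image of
`I/(q-1)I`, then the kernel of `id ⊗ φ : k ⊗_R A → k ⊗_R B` equals the image
of `k ⊗_R I`. -/
theorem stmt_8 (k₀ : Type*) [Field k₀]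
    (k : Type*) [Field k] [Algebra k₀ k] [Algebra (LaurentPolynomial k₀) k]
    [IsScalarTower k₀ (LaurentPolynomial k₀) k]
    (htrans : Transcendental k₀
      (algebraMap (LaurentPolynomial k₀) k (LaurentPolynomial.T 1)))
    (A B : Type*) [Ring A] [Ring B]
    [Algebra (LaurentPolynomial k₀) A] [Algebra (LaurentPolynomial k₀) B]
    (φ : A →ₐ[LaurentPolynomial k₀] B)
    (htfB : NoZeroSMulDivisors (LaurentPolynomial k₀) B)
    (I : Ideal A) (hI : ∀ x ∈ I, φ x = 0)
    -- direct sum decompositions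
    (J : Type*) [DecidableEq J]
    (Ij Aj : J → Submodule (LaurentPolynomial k₀) A)
    (Bj : J → Submodule (LaurentPolynomial k₀) B)
    (hAdec : DirectSum.IsInternal Aj) (hBdec : DirectSum.IsInternal Bj)
    (hIsum : ⨆ j, Ij j = Submodule.restrictScalars (LaurentPolynomial k₀) I)
    (hIA : ∀ j, Ij j ≤ Aj j)
    (hAfg : ∀ j, (Aj j).FG)
    (hφj : ∀ j, ∀ a ∈ Aj j, φ a ∈ Bj j)
    -- `ker φ̄` equals the image of `I/(q-1)I` in `A/(q-1)A`
    (hred : ∀ a : A,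
      (∃ b : B, φ a = ((LaurentPolynomial.T 1 - 1 : LaurentPolynomial k₀)) • b) ↔
      (∃ x ∈ I, ∃ a' : A, a = x +
        ((LaurentPolynomial.T 1 - 1 : LaurentPolynomial k₀)) • a')) :
    -- conclusion: `ker (id ⊗ φ)` equals the image of `k ⊗_R I`
    (RingHom.ker (Algebra.TensorProduct.map (AlgHom.id k k) φ)).restrictScalars k =
      LinearMap.range (LinearMap.baseChange k
        (Submodule.subtype (Submodule.restrictScalars (LaurentPolynomial k₀) I))) := by
  classical
  set R := LaurentPolynomial k₀ with hRdef
  set t : R := LaurentPolynomial.T 1 - 1 with htdef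
  set q : k := algebraMap R k (LaurentPolynomial.T 1) with hqdef
  -- `algebraMap R k` is injective
  have key : ∀ p : Polynomial k₀,
      algebraMap R k (Polynomial.toLaurent p) = Polynomial.aeval q p := by
    have : (IsScalarTower.toAlgHom k₀ R k).comp Polynomial.toLaurentAlg
        = Polynomial.aeval q := by
      apply Polynomial.algHom_ext
      rw [Polynomial.aeval_X, AlgHom.comp_apply]
      show algebraMap R k (Polynomial.toLaurent Polynomial.X) = q
      rw [Polynomial.toLaurent_X, hqdef]
    intro p
    have := DFunLike.congr_fun this p
    exact this
  have hinj : Function.Injective (algebraMap R k) := by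
    rw [injective_iff_map_eq_zero]
    intro f hf
    by_contra hf0
    obtain ⟨n, f', hff'⟩ := f.exists_T_pow
    have hf' : f' ≠ 0 := by
      intro h
      rw [h, map_zero] at hff'
      exact hf0 (((LaurentPolynomial.isUnit_T (n : ℤ)).mul_left_eq_zero).mp hff'.symm)
    have : Polynomial.aeval q f' = 0 := by
      rw [← key, hff', map_mul, hf, zero_mul]
    exact hf' (transcendental_iff.mp htrans f' this)
  -- `q ≠ 1`, hence `t ≠ 0`
  have hq1 : q ≠ 1 := by
    intro h
    have h2 : Polynomial.aeval q (Polynomial.X - Polynomial.C 1 : Polynomial k₀) = 0 := by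
      simp [h]
    have := transcendental_iff.mp htrans _ h2
    exact Polynomial.X_sub_C_ne_zero 1 this
  have ht0 : t ≠ 0 := by
    intro h
    apply hq1
    have : (LaurentPolynomial.T 1 : R) = 1 := by
      have := sub_eq_zero.mp h
      exact this
    rw [hqdef, this, map_one]
  -- `t` is not a unit
  have htu : ¬ IsUnit t := by
    intro h
    have h1 : ((AddMonoidAlgebra.lift k₀ k₀ ℤ) 1) (LaurentPolynomial.T 1 : R) = 1 := by
      show ((AddMonoidAlgebra.lift k₀ k₀ ℤ) 1) (AddMonoidAlgebra.single (1:ℤ) (1:k₀)) = 1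
      rw [AddMonoidAlgebra.lift_single]; simp
    have hε : ((AddMonoidAlgebra.lift k₀ k₀ ℤ) 1) t = 0 := by
      rw [htdef, map_sub, h1, map_one, sub_self]
    have := h.map ((AddMonoidAlgebra.lift k₀ k₀ ℤ) 1)
    rw [hε] at this
    exact not_isUnit_zero this
  haveI : IsDomain R := NoZeroDivisors.to_isDomain _
  haveI hNoeth : IsNoetherianRing R := by
    haveI := LaurentPolynomial.isLocalization (R := k₀)
    exact IsLocalization.isNoetherianRing
      (Submonoid.powers (Polynomial.X : Polynomial k₀)) _ inferInstance
  -- decomposition machinery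
  letI decA : DirectSum.Decomposition Aj := hAdec.chooseDecomposition
  letI decB : DirectSum.Decomposition Bj := hBdec.chooseDecomposition
  -- φ commutes with the projections
  have compφ : ∀ (j : J) (a : A),
      φ ((DirectSum.decompose Aj a j : A)) = ((DirectSum.decompose Bj (φ a)) j : B) := by
    intro j a
    conv_rhs => rw [← DirectSum.sum_support_decompose Aj a]
    rw [map_sum, DirectSum.decompose_sum, DFinsupp.finset_sum_apply,
      AddSubmonoidClass.coe_finset_sum]
    have hterm : ∀ i, ((DirectSum.decompose Bj (φ ((DirectSum.decompose Aj a i : A)))) j : B)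
        = if i = j then φ ((DirectSum.decompose Aj a j : A)) else 0 := by
      intro i
      by_cases hij : i = j
      · subst hij
        rw [if_pos rfl]
        exact DirectSum.decompose_of_mem_same Bj (hφj i _ (SetLike.coe_mem _))
      · rw [if_neg hij]
        exact DirectSum.decompose_of_mem_ne Bj (hφj i _ (SetLike.coe_mem _)) hij
    rw [Finset.sum_congr rfl fun i _ => hterm i, Finset.sum_ite_eq']
    by_cases hj : j ∈ (DirectSum.decompose Aj a).support
    · rw [if_pos hj]
    · rw [if_neg hj]
      have : DirectSum.decompose Aj a j = 0 := DFinsupp.notMem_support_iff.mp hj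
      rw [this]
      simp
  -- components of elements of I lie in Ij
  have hIj_le : ∀ j, Ij j ≤ Submodule.restrictScalars R I := fun j => hIsum ▸ le_iSup Ij j
  have memI : ∀ (j : J), ∀ x ∈ I, (DirectSum.decompose Aj x j : A) ∈ Ij j := by
    intro j x hx
    have hx' : x ∈ ⨆ l, Ij l := by rw [hIsum]; exact hx
    refine Submodule.iSup_induction (motive := fun y => (DirectSum.decompose Aj y j : A) ∈ Ij j)
      Ij hx' ?_ ?_ ?_
    · intro l y hy
      by_cases hlj : l = j
      · subst hlj
        rw [DirectSum.decompose_of_mem_same Aj (hIA l hy)]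
        exact hy
      · rw [DirectSum.decompose_of_mem_ne Aj (hIA l hy) hlj]
        exact zero_mem _
    · simp
    · intro y z hy hz
      rw [DirectSum.decompose_add]
      simpa using add_mem hy hz
  -- the graded pieces of the kernel
  set K : Submodule R A := LinearMap.ker φ.toLinearMap with hKdef
  set Kj : J → Submodule R A := fun j => K ⊓ Aj j with hKjdef
  have step : ∀ j, ∀ x ∈ Kj j, ∃ i ∈ Ij j, ∃ y ∈ Kj j, x = i + t • y := by
    intro j x hx
    obtain ⟨hxK, hxA⟩ := hx
    have hφx : φ x = 0 := hxK
    obtain ⟨i₀, hi₀, a', ha'⟩ := (hred x).mp ⟨0, by rw [hφx, smul_zero]⟩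
    -- project everything to the j-th component
    have hproj : x = (DirectSum.decompose Aj i₀ j : A) + t • (DirectSum.decompose Aj a' j : A) := by
      conv_lhs => rw [← DirectSum.decompose_of_mem_same Aj hxA]
      rw [ha', DirectSum.decompose_add, DirectSum.decompose_smul]
      simp [DirectSum.add_apply, DirectSum.smul_apply, Submodule.coe_smul]
    set i := (DirectSum.decompose Aj i₀ j : A) with hidef
    set y := (DirectSum.decompose Aj a' j : A) with hydef
    have hiI : i ∈ Ij j := memI j i₀ hi₀
    have hφi : φ i = 0 := hI i (hIj_le j hiI)
    have hφy : φ y = 0 := by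
      have h1 : t • φ y = 0 := by
        have : φ x = φ i + t • φ y := by
          rw [hproj, map_add, map_smul]
        rw [hφx, hφi, zero_add] at this
        exact this.symm
      rcases smul_eq_zero.mp h1 with h | h
      · exact absurd h ht0
      · exact h
    exact ⟨i, hiI, y, ⟨hφy, SetLike.coe_mem _⟩, hproj⟩
  -- each Kj is finitely generated
  have hKfg : ∀ j, (Kj j).FG := by
    intro j
    haveI : IsNoetherian R (Aj j) := isNoetherian_of_fg_of_noetherian _ (hAfg j)
    have h2 := IsNoetherian.noetherian (Submodule.comap (Aj j).subtype (Kj j))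
    have h3 := h2.map (Aj j).subtype
    rwa [Submodule.map_comap_subtype,
      inf_eq_right.mpr (inf_le_right : Kj j ≤ Aj j)] at h3
  -- Nakayama: each Kj is killed into I by a nonzero scalar
  have tors : ∀ j, ∃ r : R, r ≠ 0 ∧ ∀ x ∈ Kj j, r • x ∈ Submodule.restrictScalars R I := by
    intro j
    set I' : Submodule R A := Submodule.restrictScalars R I with hI'def
    set N : Submodule R (A ⧸ I') := Submodule.map I'.mkQ (Kj j) with hNdef
    have hNfg : N.FG := (hKfg j).map _
    have hIN : N ≤ (Ideal.span {t}) • N := by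
      rintro n hn
      obtain ⟨x, hx, rfl⟩ := hn
      obtain ⟨i, hiI, y, hyK, rfl⟩ := step j x hx
      have h1 : I'.mkQ (i + t • y) = t • I'.mkQ y := by
        rw [map_add, map_smul]
        have : I'.mkQ i = 0 := (Submodule.Quotient.mk_eq_zero I').mpr (hIj_le j hiI)
        rw [show I'.mkQ i = 0 from this, zero_add]
      rw [h1]
      exact Submodule.smul_mem_smul (Ideal.mem_span_singleton_self t)
        (Submodule.mem_map_of_mem hyK)
    obtain ⟨r, hr1, hr0⟩ :=
      Submodule.exists_sub_one_mem_and_smul_eq_zero_of_fg_of_le_smul (Ideal.span {t}) N hNfg hIN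
    refine ⟨r, ?_, ?_⟩
    · intro h
      rw [h, zero_sub] at hr1
      obtain ⟨c, hc⟩ := Ideal.mem_span_singleton.mp hr1
      exact htu (isUnit_of_dvd_unit ⟨c, hc⟩ isUnit_one.neg)
    · intro x hx
      have := hr0 (I'.mkQ x) (Submodule.mem_map_of_mem hx)
      rw [← map_smul] at this
      exact (Submodule.Quotient.mk_eq_zero I').mp this
  -- global torsion statement
  have htors : ∀ x : A, φ x = 0 →
      ∃ r : R, r ≠ 0 ∧ r • x ∈ Submodule.restrictScalars R I := by
    intro x hφx
    choose r hr0 hrI using tors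
    set s := (DirectSum.decompose Aj x).support with hsdef
    refine ⟨∏ i ∈ s, r i, Finset.prod_ne_zero_iff.mpr fun i _ => hr0 i, ?_⟩
    have hxK : ∀ i : J, (DirectSum.decompose Aj x i : A) ∈ Kj i := by
      intro i
      refine ⟨?_, SetLike.coe_mem _⟩
      show φ _ = 0
      rw [compφ i x, hφx]
      simp
    have hdec : (∑ i ∈ s, ((DirectSum.decompose Aj x i : A))) = x := by
      rw [hsdef]
      exact DirectSum.sum_support_decompose Aj x
    rw [← hdec, Finset.smul_sum]
    refine Submodule.sum_mem _ fun i hi => ?_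
    rw [← Finset.mul_prod_erase s r hi, mul_comm, mul_smul]
    exact Submodule.smul_mem _ _ (hrI i _ (hxK i))
  -- flatness of `k` over `R`
  letI : Algebra (FractionRing R) k := RingHom.toAlgebra (IsFractionRing.lift hinj)
  haveI : IsScalarTower R (FractionRing R) k :=
    IsScalarTower.of_algebraMap_eq fun x => (IsFractionRing.lift_algebraMap hinj x).symm
  haveI : Module.Flat R (FractionRing R) := IsLocalization.flat _ (nonZeroDivisors R)
  haveI : Module.Flat R k := Module.Flat.trans R (FractionRing R) k
  -- exactness of `K → A → B` and its base change
  have hex : Function.Exact (K.subtype) φ.toLinearMap :=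
    LinearMap.exact_iff.mpr (by rw [Submodule.range_subtype])
  have hex2 := Module.Flat.lTensor_exact k hex
  -- identification of the tensored algebra map with the base change
  have hΦ : ∀ x : k ⊗[R] A,
      (Algebra.TensorProduct.map (AlgHom.id k k) φ) x = LinearMap.baseChange k φ.toLinearMap x := by
    intro x
    induction x with
    | zero => simp
    | tmul c a => rfl
    | add x y hx hy => rw [map_add, map_add, hx, hy]
  set I' : Submodule R A := Submodule.restrictScalars R I with hI'def
  -- range of base-changed K is contained in range of base-changed I
  have hrange : ∀ z : k ⊗[R] K, (LinearMap.baseChange k K.subtype) z ∈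
      LinearMap.range (LinearMap.baseChange k I'.subtype) := by
    intro z
    induction z with
    | zero => rw [map_zero]; exact zero_mem _
    | tmul c x =>
      obtain ⟨x, hx⟩ := x
      have hφx : φ x = 0 := hx
      obtain ⟨r, hr0, hrI⟩ := htors x hφx
      have hu : algebraMap R k r ≠ 0 := fun h => hr0 (hinj (by rw [h, map_zero]))
      refine ⟨(c * (algebraMap R k r)⁻¹) ⊗ₜ[R] (⟨r • x, hrI⟩ : I'), ?_⟩
      rw [LinearMap.baseChange_tmul, LinearMap.baseChange_tmul]
      show (c * (algebraMap R k r)⁻¹) ⊗ₜ[R] (r • x) = c ⊗ₜ[R] x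
      rw [← TensorProduct.smul_tmul, Algebra.smul_def]
      congr 1
      field_simp
    | add z w hz hw => rw [map_add]; exact add_mem hz hw
  -- final assembly
  ext x
  simp only [Submodule.restrictScalars_mem, RingHom.mem_ker, LinearMap.mem_range]
  constructor
  · intro hx
    have h0 : LinearMap.baseChange k φ.toLinearMap x = 0 := by rw [← hΦ x, hx]
    have h1 : x ∈ Set.range (LinearMap.lTensor k K.subtype) := by
      have := (hex2 x).mp (by rwa [← LinearMap.baseChange_eq_ltensor])
      exact this
    obtain ⟨z, hz⟩ := h1
    have : (LinearMap.baseChange k K.subtype) z = x := by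
      rw [LinearMap.baseChange_eq_ltensor]; exact hz
    obtain ⟨y, hy⟩ := hrange z
    exact ⟨y, by rw [hy, this]⟩
  · rintro ⟨y, rfl⟩
    rw [hΦ]
    have hcomp : φ.toLinearMap ∘ₗ I'.subtype = 0 := by
      ext ⟨x, hx⟩
      exact hI x hx
    rw [← LinearMap.comp_apply, ← LinearMap.baseChange_comp, hcomp, LinearMap.baseChange_zero]
    rfl
end

section
/- The quantum matrix multiplication map μ_q*: O_q(M_{m,n}(R)) → O_q(M_{m,t}(R)) ⊗_R O_q(M_{t,n}(R)) determined by X_{ij} ↦ Σ_{l=1}^t X_{il}⊗X_{lj} is a well-defined R-algebra homomorphism, and it is homogeneous doubling degrees: μ_q*(degree-j component) ⊆ degree-2j component of the tensor product grading. -/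
/-- The defining relations of the quantum matrix algebra `O_q(M_{m,n}(R))`. -/
inductive QMatRel (R : Type*) [CommRing R] (q : Rˣ) (m n : ℕ) :
    FreeAlgebra R (Fin m × Fin n) → FreeAlgebra R (Fin m × Fin n) → Prop
  | row {i : Fin m} {j l : Fin n} (h : j < l) :
      QMatRel R q m n (FreeAlgebra.ι R (i, j) * FreeAlgebra.ι R (i, l))
        ((q : R) • (FreeAlgebra.ι R (i, l) * FreeAlgebra.ι R (i, j)))
  | col {i k : Fin m} {j : Fin n} (h : i < k) :
      QMatRel R q m n (FreeAlgebra.ι R (i, j) * FreeAlgebra.ι R (k, j))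
        ((q : R) • (FreeAlgebra.ι R (k, j) * FreeAlgebra.ι R (i, j)))
  | antidiag {i k : Fin m} {j l : Fin n} (hik : i < k) (hjl : j < l) :
      QMatRel R q m n (FreeAlgebra.ι R (i, l) * FreeAlgebra.ι R (k, j))
        (FreeAlgebra.ι R (k, j) * FreeAlgebra.ι R (i, l))
  | diag {i k : Fin m} {j l : Fin n} (hik : i < k) (hjl : j < l) :
      QMatRel R q m n (FreeAlgebra.ι R (i, j) * FreeAlgebra.ι R (k, l))
        (FreeAlgebra.ι R (k, l) * FreeAlgebra.ι R (i, j) +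
          ((q : R) - ((q⁻¹ : Rˣ) : R)) •
            (FreeAlgebra.ι R (i, l) * FreeAlgebra.ι R (k, j)))

/-- The quantum matrix algebra `O_q(M_{m,n}(R))`. -/
def QMatrixAlgebra (R : Type*) [CommRing R] (q : Rˣ) (m n : ℕ) : Type _ :=
  RingQuot (QMatRel R q m n)

noncomputable instance (R : Type*) [CommRing R] (q : Rˣ) (m n : ℕ) :
    Ring (QMatrixAlgebra R q m n) := inferInstanceAs (Ring (RingQuot _))

noncomputable instance (R : Type*) [CommRing R] (q : Rˣ) (m n : ℕ) :
    Algebra R (QMatrixAlgebra R q m n) := inferInstanceAs (Algebra R (RingQuot _))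

/-- The generators `X_{ij}` of the quantum matrix algebra. -/
noncomputable def qmX (R : Type*) [CommRing R] (q : Rˣ) (m n : ℕ)
    (p : Fin m × Fin n) : QMatrixAlgebra R q m n :=
  RingQuot.mkAlgHom R (QMatRel R q m n) (FreeAlgebra.ι R p)

/-- The degree-`d` component of the quantum matrix algebra: the `R`-span of
the products of `d` generators. -/
noncomputable def qmDeg (R : Type*) [CommRing R] (q : Rˣ) (m n : ℕ) (d : ℕ) :
    Submodule R (QMatrixAlgebra R q m n) :=
  Submodule.span R
    {x | ∃ l : List (Fin m × Fin n), l.length = d ∧ x = (l.map (qmX R q m n)).prod}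


section QMAux

open TensorProduct

variable {R : Type*} [CommRing R] {q : Rˣ}

/-- Row relation for generators. -/
lemma qmX_row {m n : ℕ} {i : Fin m} {j l : Fin n} (h : j < l) :
    qmX R q m n (i, j) * qmX R q m n (i, l) =
      (q : R) • (qmX R q m n (i, l) * qmX R q m n (i, j)) := by
  have := RingQuot.mkAlgHom_rel R (QMatRel.row (R := R) (q := q) (i := i) h)
  simp only [map_mul, map_smul] at this
  exact this

/-- Column relation for generators. -/
lemma qmX_col {m n : ℕ} {i k : Fin m} {j : Fin n} (h : i < k) :
    qmX R q m n (i, j) * qmX R q m n (k, j) =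
      (q : R) • (qmX R q m n (k, j) * qmX R q m n (i, j)) := by
  have := RingQuot.mkAlgHom_rel R (QMatRel.col (R := R) (q := q) (j := j) h)
  simp only [map_mul, map_smul] at this
  exact this

/-- Antidiagonal relation for generators. -/
lemma qmX_antidiag {m n : ℕ} {i k : Fin m} {j l : Fin n} (hik : i < k) (hjl : j < l) :
    qmX R q m n (i, l) * qmX R q m n (k, j) = qmX R q m n (k, j) * qmX R q m n (i, l) := by
  have := RingQuot.mkAlgHom_rel R (QMatRel.antidiag (R := R) (q := q) hik hjl)
  simp only [map_mul] at this
  exact this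

/-- Diagonal relation for generators. -/
lemma qmX_diag {m n : ℕ} {i k : Fin m} {j l : Fin n} (hik : i < k) (hjl : j < l) :
    qmX R q m n (i, j) * qmX R q m n (k, l) =
      qmX R q m n (k, l) * qmX R q m n (i, j) +
        ((q : R) - ((q⁻¹ : Rˣ) : R)) • (qmX R q m n (i, l) * qmX R q m n (k, j)) := by
  have := RingQuot.mkAlgHom_rel R (QMatRel.diag (R := R) (q := q) hik hjl)
  simp only [map_mul, map_add, map_smul] at this
  exact this

/-- Splitting a double sum over a square into diagonal and symmetrized pairs. -/
lemma qm_sum_sq_eq {M ι : Type*} [AddCommMonoid M] [LinearOrder ι] (s : Finset ι)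
    (F G : ι → ι → M) (hd : ∀ a, F a a = G a a)
    (hp : ∀ a b, a < b → F a b + F b a = G a b + G b a) :
    ∑ a ∈ s, ∑ b ∈ s, F a b = ∑ a ∈ s, ∑ b ∈ s, G a b := by
  classical
  induction s using Finset.induction_on with
  | empty => simp
  | insert a s h ih =>
    have key : ∑ b ∈ s, F a b + ∑ b ∈ s, F b a = ∑ b ∈ s, G a b + ∑ b ∈ s, G b a := by
      rw [← Finset.sum_add_distrib, ← Finset.sum_add_distrib]
      refine Finset.sum_congr rfl fun b hb => ?_
      rcases lt_trichotomy a b with hab | rfl | hab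
      · exact hp a b hab
      · exact absurd hb h
      · have h2 := hp b a hab
        rw [add_comm (F a b), add_comm (G a b)]
        exact h2
    simp only [Finset.sum_insert h]
    simp only [Finset.sum_add_distrib]
    rw [hd a, ih, add_assoc, add_assoc]
    congr 1
    rw [← add_assoc, ← add_assoc, key]

variable {m n t : ℕ}

/-- The image of the generator `X_{ij}` under comultiplication. -/
noncomputable def qmT (R : Type*) [CommRing R] (q : Rˣ) (m n t : ℕ)
    (i : Fin m) (j : Fin n) :
    QMatrixAlgebra R q m t ⊗[R] QMatrixAlgebra R q t n :=
  ∑ a : Fin t, qmX R q m t (i, a) ⊗ₜ[R] qmX R q t n (a, j)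

lemma qmT_mul (i k : Fin m) (j l : Fin n) :
    qmT R q m n t i j * qmT R q m n t k l =
      ∑ a : Fin t, ∑ b : Fin t,
        (qmX R q m t (i, a) * qmX R q m t (k, b)) ⊗ₜ[R]
          (qmX R q t n (a, j) * qmX R q t n (b, l)) := by
  rw [qmT, qmT, Finset.sum_mul_sum]
  simp [Algebra.TensorProduct.tmul_mul_tmul]

lemma qm_hq : (q : R) * ((q⁻¹ : Rˣ) : R) = 1 := q.mul_inv

lemma qmT_row {i : Fin m} {j l : Fin n} (h : j < l) :
    qmT R q m n t i j * qmT R q m n t i l =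
      (q : R) • (qmT R q m n t i l * qmT R q m n t i j) := by
  have hq : (q : R) * ((q⁻¹ : Rˣ) : R) = 1 := q.mul_inv
  rw [qmT_mul, qmT_mul]
  simp only [Finset.smul_sum]
  refine qm_sum_sq_eq _ _ _ (fun a => ?_) (fun a b hab => ?_)
  · rw [qmX_row h, tmul_smul]
  · rw [qmX_row (i := i) hab, qmX_diag hab h, qmX_antidiag hab h]
    simp only [tmul_add, tmul_smul, ← smul_tmul', smul_add, smul_smul]
    match_scalars <;>
      first
        | ring1
        | linear_combination hq
        | linear_combination -hq
        | linear_combination (q : R) * hq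
        | linear_combination -(q : R) * hq
        | linear_combination ((q : R) * (q : R)) * hq
        | linear_combination (-(q : R) * (q : R)) * hq

lemma qmT_col {i k : Fin m} {j : Fin n} (h : i < k) :
    qmT R q m n t i j * qmT R q m n t k j =
      (q : R) • (qmT R q m n t k j * qmT R q m n t i j) := by
  have hq : (q : R) * ((q⁻¹ : Rˣ) : R) = 1 := q.mul_inv
  rw [qmT_mul, qmT_mul]
  simp only [Finset.smul_sum]
  refine qm_sum_sq_eq _ _ _ (fun a => ?_) (fun a b hab => ?_)
  · rw [qmX_col h, smul_tmul']
  · rw [qmX_col (j := j) hab, qmX_diag h hab, qmX_antidiag h hab]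
    simp only [tmul_add, add_tmul, tmul_smul, ← smul_tmul', smul_add, smul_smul]
    match_scalars <;>
      first
        | ring1
        | linear_combination hq
        | linear_combination -hq
        | linear_combination (q : R) * hq
        | linear_combination -(q : R) * hq
        | linear_combination ((q : R) * (q : R)) * hq
        | linear_combination (-(q : R) * (q : R)) * hq

lemma qmT_antidiag {i k : Fin m} {j l : Fin n} (hik : i < k) (hjl : j < l) :
    qmT R q m n t i l * qmT R q m n t k j = qmT R q m n t k j * qmT R q m n t i l := by
  rw [qmT_mul, qmT_mul]
  refine qm_sum_sq_eq _ _ _ (fun a => ?_) (fun a b hab => ?_)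
  · rw [qmX_col hik, qmX_row hjl, tmul_smul, smul_tmul']
  · rw [qmX_diag hik hab, qmX_antidiag hik hab, qmX_diag hab hjl, qmX_antidiag hab hjl]
    simp only [tmul_add, add_tmul, tmul_smul, ← smul_tmul', smul_add, smul_smul]
    match_scalars <;> ring1

lemma qmT_diag {i k : Fin m} {j l : Fin n} (hik : i < k) (hjl : j < l) :
    qmT R q m n t i j * qmT R q m n t k l =
      qmT R q m n t k l * qmT R q m n t i j +
        ((q : R) - ((q⁻¹ : Rˣ) : R)) • (qmT R q m n t i l * qmT R q m n t k j) := by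
  have hq : (q : R) * ((q⁻¹ : Rˣ) : R) = 1 := q.mul_inv
  rw [qmT_mul, qmT_mul, qmT_mul, Finset.smul_sum]
  simp only [Finset.smul_sum, ← Finset.sum_add_distrib]
  refine qm_sum_sq_eq _ _ _ (fun a => ?_) (fun a b hab => ?_)
  · rw [qmX_col hik, qmX_row hjl]
    simp only [tmul_smul, ← smul_tmul', smul_smul]
    match_scalars <;>
      first
        | ring1
        | linear_combination hq
        | linear_combination -hq
        | linear_combination (q : R) * hq
        | linear_combination -(q : R) * hq
        | linear_combination ((q : R) * (q : R)) * hq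
        | linear_combination (-(q : R) * (q : R)) * hq
  · rw [qmX_diag hik hab, qmX_antidiag hik hab, qmX_diag hab hjl, qmX_antidiag hab hjl]
    simp only [tmul_add, add_tmul, tmul_smul, ← smul_tmul', smul_add, smul_smul]
    match_scalars <;>
      first
        | ring1
        | linear_combination hq
        | linear_combination -hq
        | linear_combination (q : R) * hq
        | linear_combination -(q : R) * hq
        | linear_combination ((q : R) * (q : R)) * hq
        | linear_combination (-(q : R) * (q : R)) * hq

/-- Comultiplication as an algebra homomorphism. -/
noncomputable def qmMu (R : Type*) [CommRing R] (q : Rˣ) (m n t : ℕ) :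
    QMatrixAlgebra R q m n →ₐ[R]
      (QMatrixAlgebra R q m t ⊗[R] QMatrixAlgebra R q t n) :=
  RingQuot.liftAlgHom R
    ⟨FreeAlgebra.lift R (fun p : Fin m × Fin n => qmT R q m n t p.1 p.2), by
      intro x y hxy
      induction hxy with
      | row h =>
        simp only [map_mul, map_smul, FreeAlgebra.lift_ι_apply]
        exact qmT_row h
      | col h =>
        simp only [map_mul, map_smul, FreeAlgebra.lift_ι_apply]
        exact qmT_col h
      | antidiag hik hjl =>
        simp only [map_mul, FreeAlgebra.lift_ι_apply]
        exact qmT_antidiag hik hjl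
      | diag hik hjl =>
        simp only [map_mul, map_add, map_smul, FreeAlgebra.lift_ι_apply]
        exact qmT_diag hik hjl⟩

lemma qmMu_apply_qmX (p : Fin m × Fin n) :
    qmMu R q m n t (qmX R q m n p) =
      ∑ a : Fin t, qmX R q m t (p.1, a) ⊗ₜ[R] qmX R q t n (a, p.2) := by
  rw [qmMu, qmX]
  exact (RingQuot.liftAlgHom_mkAlgHom_apply R _ _ _).trans
    (by rw [FreeAlgebra.lift_ι_apply, qmT])

lemma qmX_mem_deg_one (p : Fin m × Fin n) : qmX R q m n p ∈ qmDeg R q m n 1 :=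
  Submodule.subset_span ⟨[p], rfl, by simp⟩

lemma qmDeg_one_mem : (1 : QMatrixAlgebra R q m n) ∈ qmDeg R q m n 0 :=
  Submodule.subset_span ⟨[], rfl, by simp⟩

lemma qmDeg_mul_le (a b : ℕ) :
    qmDeg R q m n a * qmDeg R q m n b ≤ qmDeg R q m n (a + b) := by
  rw [qmDeg, qmDeg, Submodule.span_mul_span]
  refine Submodule.span_le.2 ?_
  rintro z hz
  rw [Set.mem_mul] at hz
  obtain ⟨x, ⟨l1, hl1, rfl⟩, y, ⟨l2, hl2, rfl⟩, rfl⟩ := hz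
  exact Submodule.subset_span ⟨l1 ++ l2, by simp [hl1, hl2], by simp⟩

lemma qmDeg_mul_mem {a b : ℕ} {x y : QMatrixAlgebra R q m n}
    (hx : x ∈ qmDeg R q m n a) (hy : y ∈ qmDeg R q m n b) :
    x * y ∈ qmDeg R q m n (a + b) :=
  qmDeg_mul_le a b (Submodule.mul_mem_mul hx hy)

/-- The span of pure tensors of elements of degree `d` in each factor. -/
noncomputable def qmP (R : Type*) [CommRing R] (q : Rˣ) (m n t : ℕ) (d : ℕ) :
    Submodule R (QMatrixAlgebra R q m t ⊗[R] QMatrixAlgebra R q t n) :=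
  Submodule.span R
    {z | ∃ x y, x ∈ qmDeg R q m t d ∧ y ∈ qmDeg R q t n d ∧ z = x ⊗ₜ[R] y}

lemma qmP_mul_le (a b : ℕ) :
    qmP R q m n t a * qmP R q m n t b ≤ qmP R q m n t (a + b) := by
  rw [qmP, qmP, Submodule.span_mul_span]
  refine Submodule.span_le.2 ?_
  rintro z hz
  rw [Set.mem_mul] at hz
  obtain ⟨u, ⟨x1, y1, hx1, hy1, rfl⟩, v, ⟨x2, y2, hx2, hy2, rfl⟩, rfl⟩ := hz
  exact Submodule.subset_span ⟨x1 * x2, y1 * y2,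
    qmDeg_mul_mem hx1 hx2, qmDeg_mul_mem hy1 hy2,
    Algebra.TensorProduct.tmul_mul_tmul _ _ _ _⟩

lemma qmP_mul_mem {a b : ℕ}
    {x y : QMatrixAlgebra R q m t ⊗[R] QMatrixAlgebra R q t n}
    (hx : x ∈ qmP R q m n t a) (hy : y ∈ qmP R q m n t b) :
    x * y ∈ qmP R q m n t (a + b) :=
  qmP_mul_le a b (Submodule.mul_mem_mul hx hy)

lemma qmT_mem (i : Fin m) (j : Fin n) : qmT R q m n t i j ∈ qmP R q m n t 1 := by
  refine Submodule.sum_mem _ fun a _ => Submodule.subset_span ?_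
  exact ⟨_, _, qmX_mem_deg_one _, qmX_mem_deg_one _, rfl⟩

lemma qmP_prod_mem (l : List (Fin m × Fin n)) :
    (l.map (fun p : Fin m × Fin n => qmT R q m n t p.1 p.2)).prod ∈
      qmP R q m n t l.length := by
  induction l with
  | nil =>
    simp only [List.map_nil, List.prod_nil, List.length_nil]
    exact Submodule.subset_span ⟨1, 1, qmDeg_one_mem, qmDeg_one_mem,
      Algebra.TensorProduct.one_def⟩
  | cons p l ih =>
    simp only [List.map_cons, List.prod_cons, List.length_cons]
    have := qmP_mul_mem (qmT_mem (t := t) p.1 p.2) ih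
    rwa [add_comm] at this

end QMAux

open TensorProduct in
/-- The quantum matrix multiplication map
`μ_q* : O_q(M_{m,n}(R)) → O_q(M_{m,t}(R)) ⊗_R O_q(M_{t,n}(R))`,
`X_{ij} ↦ Σ_l X_{il} ⊗ X_{lj}`, is a well-defined `R`-algebra homomorphism,
and it doubles degrees: it maps the degree-`j` component into the total
degree-`2j` component of the tensor product grading. -/
theorem stmt_16 (R : Type*) [CommRing R] (q : Rˣ) (m n t : ℕ) :
    ∃ μ : QMatrixAlgebra R q m n →ₐ[R]
        (QMatrixAlgebra R q m t ⊗[R] QMatrixAlgebra R q t n),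
      (∀ p : Fin m × Fin n, μ (qmX R q m n p) =
        ∑ l : Fin t, qmX R q m t (p.1, l) ⊗ₜ[R] qmX R q t n (l, p.2)) ∧
      (∀ j : ℕ, Submodule.map μ.toLinearMap (qmDeg R q m n j) ≤
        Submodule.span R
          {z : QMatrixAlgebra R q m t ⊗[R] QMatrixAlgebra R q t n |
            ∃ (a b : ℕ) (x : QMatrixAlgebra R q m t) (y : QMatrixAlgebra R q t n),
              a + b = 2 * j ∧ x ∈ qmDeg R q m t a ∧ y ∈ qmDeg R q t n b ∧
                z = x ⊗ₜ[R] y}) := by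
  classical
  refine ⟨qmMu R q m n t, fun p => qmMu_apply_qmX p, fun j => ?_⟩
  rw [qmDeg, Submodule.map_span, Submodule.span_le]
  rintro z ⟨x, ⟨l, hl, rfl⟩, rfl⟩
  have hz : (qmMu R q m n t).toLinearMap ((l.map (qmX R q m n)).prod) =
      (l.map (fun p : Fin m × Fin n => qmT R q m n t p.1 p.2)).prod := by
    rw [AlgHom.toLinearMap_apply, map_list_prod]
    congr 1
    rw [List.map_map]
    refine List.map_congr_left fun p _ => ?_
    simp only [Function.comp_apply]
    rw [qmMu_apply_qmX, qmT]
  rw [hz]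
  have hmem := qmP_prod_mem (R := R) (q := q) (t := t) l
  rw [hl] at hmem
  have hle : qmP R q m n t j ≤ Submodule.span R
      {z : QMatrixAlgebra R q m t ⊗[R] QMatrixAlgebra R q t n |
        ∃ (a b : ℕ) (x : QMatrixAlgebra R q m t) (y : QMatrixAlgebra R q t n),
          a + b = 2 * j ∧ x ∈ qmDeg R q m t a ∧ y ∈ qmDeg R q t n b ∧
            z = x ⊗ₜ[R] y} := by
    rw [qmP, Submodule.span_le]
    rintro w ⟨x, y, hx, hy, rfl⟩
    exact Submodule.subset_span ⟨j, j, x, y, by ring, hx, hy, rfl⟩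
  exact hle hmem
end

section
/- In the polynomial ring O(M_n(k)), the functions tr_1, …, tr_n, where tr_i is the sum of all i×i principal minors of the generic matrix (X_{ij}), are invariant under the conjugation action of GL_n(k) and are algebraically independent over k. -/
open Matrix Finset Polynomial

section helpers

variable {ι : Type*} [DecidableEq ι] [Fintype ι] {R : Type*} [CommRing R]

/-- The principal minor of `M` on the subset `s`. -/
noncomputable def pminor (M : Matrix ι ι R) (s : Finset ι) : R :=
  (M.submatrix (Subtype.val : {x // x ∈ s} → ι) Subtype.val).det

lemma det_eq_pminor_of_rows (M : Matrix ι ι R) (s : Finset ι)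
    (h : ∀ i ∉ s, ∀ j, M i j = (1 : Matrix ι ι R) i j) :
    M.det = pminor M s := by
  classical
  let e : {x // x ∈ s} ⊕ {x // x ∉ s} ≃ ι := Equiv.sumCompl (· ∈ s)
  rw [← Matrix.det_submatrix_equiv_self e M]
  have hM : M.submatrix e e =
      Matrix.fromBlocks (M.submatrix Subtype.val Subtype.val)
        (M.submatrix Subtype.val Subtype.val) 0 1 := by
    ext i j
    rcases i with a | a <;> rcases j with b | b
    · rfl
    · rfl
    · have := h a a.2 b
      simp only [submatrix_apply, e, Equiv.sumCompl_apply_inl, Equiv.sumCompl_apply_inr]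
      rw [this, Matrix.one_apply_ne, Matrix.fromBlocks_apply₂₁, Matrix.zero_apply]
      intro hab; exact a.2 (hab ▸ b.2)
    · have := h a a.2 b
      simp only [submatrix_apply, e, Equiv.sumCompl_apply_inr]
      rw [this, Matrix.fromBlocks_apply₂₂]
      simp [Matrix.one_apply, Subtype.ext_iff]
  rw [hM, Matrix.det_fromBlocks_zero₂₁, Matrix.det_one, mul_one]
  rfl

lemma det_one_add_eq_sum (M : Matrix ι ι R) :
    (1 + M).det = ∑ s : Finset ι, pminor M s := by
  classical
  have h : (M + (1 : Matrix ι ι R)).det = ∑ s : Finset ι,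
      (Matrix.detRowAlternating (R := R) (n := ι)).toMultilinearMap
        (s.piecewise M (1 : Matrix ι ι R)) :=
    (Matrix.detRowAlternating (R := R) (n := ι)).toMultilinearMap.map_add_univ M
      (1 : Matrix ι ι R)
  rw [add_comm, h]
  refine Finset.sum_congr rfl fun s _ => ?_
  have h1 : (Matrix.detRowAlternating (R := R) (n := ι)).toMultilinearMap
      (s.piecewise M (1 : Matrix ι ι R)) =
      (Matrix.of (s.piecewise M (1 : Matrix ι ι R))).det := rfl
  rw [h1, det_eq_pminor_of_rows _ s (fun i hi j => by
    show (if i ∈ s then M i else (1 : Matrix ι ι R) i) j = _; rw [if_neg hi])]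
  unfold pminor
  congr 1
  ext a b
  show (if (a : ι) ∈ s then M a else (1 : Matrix ι ι R) a) b = _; rw [if_pos a.2]; rfl

lemma coeff_det_one_add_X_smul_eq (M : Matrix ι ι R) (i : ℕ) :
    ((1 + (Polynomial.X : Polynomial R) • M.map Polynomial.C).det).coeff i =
      ∑ s ∈ (univ : Finset ι).powersetCard i, pminor M s := by
  classical
  rw [det_one_add_eq_sum, ← Finset.powerset_univ, Finset.powersetCard_eq_filter,
    Finset.sum_filter, Polynomial.finset_sum_coeff]
  rw [show ((univ : Finset ι).powerset) = (univ : Finset (Finset ι)) from Finset.powerset_univ]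
  refine Finset.sum_congr rfl fun s _ => ?_
  have h1 : pminor ((Polynomial.X : Polynomial R) • M.map Polynomial.C) s =
      (Polynomial.X : Polynomial R) ^ s.card * Polynomial.C (pminor M s) := by
    unfold pminor
    have h2 : ((Polynomial.X : Polynomial R) • M.map Polynomial.C).submatrix
        (Subtype.val : {x // x ∈ s} → ι) Subtype.val =
        (Polynomial.X : Polynomial R) •
          ((M.submatrix (Subtype.val : {x // x ∈ s} → ι)
            (Subtype.val : {x // x ∈ s} → ι)).map Polynomial.C) := by
      ext a b; simp
    rw [h2, Matrix.det_smul, ← RingHom.mapMatrix_apply, ← RingHom.map_det, Fintype.card_coe]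
  rw [h1, mul_comm, Polynomial.C_mul_X_pow_eq_monomial, Polynomial.coeff_monomial]

lemma sum_pminor_conj (A G G' : Matrix ι ι R) (hGG' : G' * G = 1) (i : ℕ) :
    ∑ s ∈ (univ : Finset ι).powersetCard i, pminor (G' * A * G) s =
      ∑ s ∈ (univ : Finset ι).powersetCard i, pminor A s := by
  classical
  rw [← coeff_det_one_add_X_smul_eq, ← coeff_det_one_add_X_smul_eq]
  have hmap : ∀ B D : Matrix ι ι R, (B * D).map (Polynomial.C : R →+* Polynomial R) =
      B.map Polynomial.C * D.map Polynomial.C := fun B D => Matrix.map_mul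
  have e1 : G'.map (Polynomial.C : R →+* Polynomial R) * G.map Polynomial.C = 1 := by
    rw [← hmap, hGG', Matrix.map_one _ (map_zero _) (map_one _)]
  have e2 : G'.map (Polynomial.C : R →+* Polynomial R) *
      ((Polynomial.X : Polynomial R) • A.map Polynomial.C) * G.map Polynomial.C =
      (Polynomial.X : Polynomial R) • (G' * A * G).map Polynomial.C := by
    rw [hmap, hmap, mul_smul_comm, smul_mul_assoc]
  have key : (1 + (Polynomial.X : Polynomial R) • (G' * A * G).map Polynomial.C) =
      G'.map Polynomial.C * (1 + (Polynomial.X : Polynomial R) • A.map Polynomial.C) *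
        G.map Polynomial.C := by
    rw [mul_add, mul_one, add_mul, e1, e2]
  have hd : (G'.map (Polynomial.C : R →+* Polynomial R)).det * (G.map Polynomial.C).det = 1 := by
    rw [← Matrix.det_mul, e1, Matrix.det_one]
  have hdet : (1 + (Polynomial.X : Polynomial R) • (G' * A * G).map Polynomial.C).det =
      (1 + (Polynomial.X : Polynomial R) • A.map Polynomial.C).det := by
    rw [key, Matrix.det_mul, Matrix.det_mul]
    calc (G'.map Polynomial.C).det *
          (1 + (Polynomial.X : Polynomial R) • A.map Polynomial.C).det * (G.map Polynomial.C).det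
        = (1 + (Polynomial.X : Polynomial R) • A.map Polynomial.C).det *
            ((G'.map Polynomial.C).det * (G.map Polynomial.C).det) := by ring
      _ = _ := by rw [hd, mul_one]
  rw [hdet]

end helpers

lemma pminor_map {ι : Type*} [DecidableEq ι] [Fintype ι] {R S : Type*} [CommRing R] [CommRing S]
    (f : R →+* S) (M : Matrix ι ι R) (s : Finset ι) :
    f (pminor M s) = pminor (M.map f) s := by
  unfold pminor
  rw [RingHom.map_det]
  congr 1

/-- `tr_i`: the sum of all `i×i` principal minors of the generic `n×n` matrix
`(X_{ij})`, as an element of `O(M_n(k)) = k[X_{ij}]`. -/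
noncomputable def trPoly (k : Type*) [CommRing k] (n i : ℕ) :
    MvPolynomial (Fin n × Fin n) k :=
  ∑ s ∈ (Finset.univ : Finset (Fin n)).powersetCard i,
    Matrix.det (Matrix.of fun a b : ↥s =>
      (MvPolynomial.X ((a : Fin n), (b : Fin n)) : MvPolynomial (Fin n × Fin n) k))

lemma trPoly_eq (k : Type*) [CommRing k] (n i : ℕ) :
    trPoly k n i = ∑ s ∈ (Finset.univ : Finset (Fin n)).powersetCard i,
      pminor (Matrix.of fun a b : Fin n =>
        (MvPolynomial.X (a, b) : MvPolynomial (Fin n × Fin n) k)) s := rfl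

/-- Over a field `k` of characteristic zero, the functions
`tr_1, …, tr_n ∈ O(M_n(k))` are invariant under the conjugation action of
`GL_n(k)` (substituting `g⁻¹ X g` for the generic matrix fixes each `tr_i`)
and are algebraically independent over `k`. -/
theorem stmt_19 (k : Type*) [Field k] [CharZero k] (n : ℕ) :
    (∀ g : GL (Fin n) k, ∀ i : ℕ, 1 ≤ i → i ≤ n →
      (MvPolynomial.aeval (fun p : Fin n × Fin n =>
        ∑ a : Fin n, ∑ b : Fin n,
          MvPolynomial.C (((↑(g⁻¹) : Matrix (Fin n) (Fin n) k) p.1 a) *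
              ((↑g : Matrix (Fin n) (Fin n) k) b p.2)) *
            (MvPolynomial.X (a, b) : MvPolynomial (Fin n × Fin n) k)))
        (trPoly k n i) = trPoly k n i) ∧
    AlgebraicIndependent k (fun i : Fin n => trPoly k n (i.1 + 1)) := by
  classical
  set S := MvPolynomial (Fin n × Fin n) k with hS
  set M : Matrix (Fin n) (Fin n) S :=
    Matrix.of (fun a b : Fin n => (MvPolynomial.X (a, b) : S)) with hMdef
  constructor
  · intro g i _ _
    set f : Fin n × Fin n → S := fun p =>
      ∑ a : Fin n, ∑ b : Fin n,
        MvPolynomial.C (((↑(g⁻¹) : Matrix (Fin n) (Fin n) k) p.1 a) *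
            ((↑g : Matrix (Fin n) (Fin n) k) b p.2)) *
          (MvPolynomial.X (a, b) : S) with hf
    set G : Matrix (Fin n) (Fin n) S :=
      (↑g : Matrix (Fin n) (Fin n) k).map (MvPolynomial.C) with hG
    set G' : Matrix (Fin n) (Fin n) S :=
      (↑(g⁻¹) : Matrix (Fin n) (Fin n) k).map (MvPolynomial.C) with hG'
    have h1 : ((↑(g⁻¹) : Matrix (Fin n) (Fin n) k) * (↑g : Matrix (Fin n) (Fin n) k)) = 1 :=
      g.inv_mul
    have hGG' : G' * G = 1 := by
      rw [hG, hG', show ((↑(g⁻¹) : Matrix (Fin n) (Fin n) k)).map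
          (⇑(MvPolynomial.C : k →+* S)) * ((↑g : Matrix (Fin n) (Fin n) k)).map
          (⇑(MvPolynomial.C : k →+* S)) = (((↑(g⁻¹) : Matrix (Fin n) (Fin n) k) *
          (↑g : Matrix (Fin n) (Fin n) k))).map (⇑(MvPolynomial.C : k →+* S)) from (Matrix.map_mul).symm, h1,
        Matrix.map_one _ (map_zero _) (map_one _)]
    have hsub : M.map ⇑(MvPolynomial.aeval f) = G' * M * G := by
      refine Matrix.ext fun p q => ?_
      simp only [Matrix.map_apply, hMdef, Matrix.of_apply, MvPolynomial.aeval_X, hf]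
      rw [Matrix.mul_apply]
      simp +zetaDelta only [Matrix.mul_apply, Finset.sum_mul]
      rw [Finset.sum_comm]
      refine Finset.sum_congr rfl fun a _ => Finset.sum_congr rfl fun b _ => ?_
      simp only [hG, hG', Matrix.map_apply, Matrix.of_apply, _root_.map_mul]
      ring
    have hterm : ∀ s : Finset (Fin n), (MvPolynomial.aeval f) (pminor M s) =
        pminor (G' * M * G) s := by
      intro s
      rw [← hsub]
      exact pminor_map ((MvPolynomial.aeval f).toRingHom) M s
    rw [trPoly_eq, map_sum]
    rw [Finset.sum_congr rfl fun s _ => hterm s, sum_pminor_conj M G G' hGG' i]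
  · let φ : S →ₐ[k] MvPolynomial (Fin n) k :=
      MvPolynomial.aeval (fun p : Fin n × Fin n =>
        if p.1 = p.2 then MvPolynomial.X p.1 else 0)
    have hMφ : M.map ⇑φ = Matrix.diagonal (fun a : Fin n => MvPolynomial.X a) := by
      refine Matrix.ext fun a b => ?_
      simp only [Matrix.map_apply, hMdef, Matrix.of_apply, φ, MvPolynomial.aeval_X,
        Matrix.diagonal_apply]
      exact MvPolynomial.aeval_X _ (a, b)
    have hφ : ∀ i : ℕ, φ (trPoly k n i) = MvPolynomial.esymm (Fin n) k i := by
      intro i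
      rw [trPoly_eq, map_sum, MvPolynomial.esymm]
      refine Finset.sum_congr rfl fun s _ => ?_
      rw [show φ (pminor M s) = pminor (M.map ⇑φ) s from pminor_map φ.toRingHom M s, hMφ]
      unfold pminor
      rw [Matrix.submatrix_diagonal _ _ Subtype.val_injective, Matrix.det_diagonal]
      exact Finset.prod_coe_sort s _
    have hesymm : AlgebraicIndependent k
        (fun j : Fin n => MvPolynomial.esymm (Fin n) k (j + 1)) := by
      rw [algebraicIndependent_iff_injective_aeval]
      have hinj := MvPolynomial.esymmAlgHom_injective (σ := Fin n) (R := k) (n := n)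
        (by rw [Fintype.card_fin])
      intro p q h
      apply hinj
      apply Subtype.ext
      rw [MvPolynomial.esymmAlgHom_apply, MvPolynomial.esymmAlgHom_apply]
      exact h
    have hcomp : (⇑φ ∘ fun i : Fin n => trPoly k n (i.1 + 1)) =
        fun j : Fin n => MvPolynomial.esymm (Fin n) k (j + 1) :=
      funext fun j => hφ _
    exact AlgebraicIndependent.of_comp φ (hcomp ▸ hesymm)
end
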